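/- Let T be a rooted ordered tree and v a vertex numbered k in the Trav-based numbering. If ν_v^{(1)} is even then k = ν_v^{(1)}/2 + 1, otherwise k = ν_v^{(2)}/2 + 1. -/

import Mathlib

/-- A finite rooted ordered tree: a root with an ordered list of subtrees. -/
inductive OTree : Type where
  | node : List OTree → OTree

mutual
/-- The visit sequence of the traversal `Trav` of the subtree rooted at the
vertex with address `a`; each vertex is visited exactly twice. -/
def trav : OTree → List ℕ → List (List ℕ)
  | .node [], a => [a, a]
  | .node (t :: ts), a => a :: (travList (t :: ts) a 0 ++ [a])

def travList : List OTree → List ℕ → ℕ → List (List ℕ)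
  | [], _, _ => []
  | t :: ts, a, i => trav t (a ++ [i]) ++ travList ts a (i + 1)
end

/-- `ν_v⁽¹⁾`: the number of visits strictly before the first visit to `v`. -/
def nu1 (t : OTree) (a : List ℕ) : ℕ := (trav t []).idxOf a

/-- `ν_v⁽²⁾`: the number of visits strictly before the second visit to `v`. -/
def nu2 (t : OTree) (a : List ℕ) : ℕ :=
  nu1 t a + 1 + ((trav t []).drop (nu1 t a + 1)).idxOf a

/-- Elements at even positions of a list. -/
def evens {α : Type*} : List α → List α
  | [] => []
  | [a] => [a]
  | a :: _ :: rest => a :: evens rest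

/-! ### Auxiliary lemmas -/

mutual
theorem trav_length_even (t : OTree) (b : List ℕ) : Even (trav t b).length := by
  match t with
  | .node [] => simp [trav]
  | .node (t :: ts) =>
    have h := travList_length_even (t :: ts) b 0
    obtain ⟨k, hk⟩ := h
    refine ⟨k + 1, ?_⟩
    simp only [trav, List.length_cons, List.length_append, List.length_nil]
    omega

theorem travList_length_even (ts : List OTree) (b : List ℕ) (i : ℕ) :
    Even (travList ts b i).length := by
  match ts with
  | [] => simp [travList]
  | t :: ts =>
    have h1 := trav_length_even t (b ++ [i])
    have h2 := travList_length_even ts b (i + 1)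
    simp only [travList, List.length_append]
    exact h1.add h2
end

mutual
theorem length_le_of_mem_trav (t : OTree) (b c : List ℕ) (h : c ∈ trav t b) :
    b.length ≤ c.length := by
  match t with
  | .node [] =>
    simp only [trav, List.mem_cons, List.not_mem_nil, or_false] at h
    rcases h with h | h <;> simp [h]
  | .node (t :: ts) =>
    simp only [trav, List.mem_cons, List.mem_append, List.not_mem_nil, or_false] at h
    rcases h with h | h | h
    · simp [h]
    · exact (length_lt_of_mem_travList (t :: ts) b 0 c h).le
    · simp [h]

theorem length_lt_of_mem_travList (ts : List OTree) (b : List ℕ) (i : ℕ) (c : List ℕ)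
    (h : c ∈ travList ts b i) : b.length < c.length := by
  match ts with
  | [] => simp [travList] at h
  | t :: ts =>
    simp only [travList, List.mem_append] at h
    rcases h with h | h
    · have := length_le_of_mem_trav t (b ++ [i]) c h
      simp only [List.length_append, List.length_singleton] at this
      omega
    · exact length_lt_of_mem_travList ts b (i + 1) c h
end

theorem self_not_mem_travList (ts : List OTree) (b : List ℕ) (i : ℕ) :
    b ∉ travList ts b i := fun h =>
  absurd rfl (Nat.ne_of_lt (length_lt_of_mem_travList ts b i b h)).symm

/-- The key decomposition: every vertex address in `trav t b` occurs exactly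
twice, and the two occurrences are separated by an even number of visits. -/
def Decomp (L : List (List ℕ)) (a : List ℕ) : Prop :=
  ∃ l₁ l₂ l₃, L = l₁ ++ a :: (l₂ ++ a :: l₃) ∧ a ∉ l₁ ∧ a ∉ l₂ ∧ Even l₂.length

mutual
theorem trav_decomp (t : OTree) (b a : List ℕ) (h : a ∈ trav t b) :
    Decomp (trav t b) a := by
  match t with
  | .node [] =>
    simp only [trav, List.mem_cons, List.not_mem_nil, or_false] at h
    have hab : a = b := by tauto
    subst hab
    exact ⟨[], [], [], by simp [trav], by simp, by simp, by simp⟩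
  | .node (t :: ts) =>
    by_cases hab : a = b
    · subst hab
      refine ⟨[], travList (t :: ts) a 0, [], by simp [trav], by simp,
        self_not_mem_travList _ _ _, travList_length_even _ _ _⟩
    · have h' : a ∈ travList (t :: ts) b 0 := by
        simp only [trav, List.mem_cons, List.mem_append, List.not_mem_nil, or_false] at h
        tauto
      obtain ⟨l₁, l₂, l₃, e, h1, h2, h3⟩ := travList_decomp (t :: ts) b 0 a h'
      refine ⟨b :: l₁, l₂, l₃ ++ [b], ?_, ?_, h2, h3⟩
      · simp [trav, e]
      · simp only [List.mem_cons]
        tauto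

theorem travList_decomp (ts : List OTree) (b : List ℕ) (i : ℕ) (a : List ℕ)
    (h : a ∈ travList ts b i) : Decomp (travList ts b i) a := by
  match ts with
  | [] => simp [travList] at h
  | t :: ts =>
    by_cases hm : a ∈ trav t (b ++ [i])
    · obtain ⟨l₁, l₂, l₃, e, h1, h2, h3⟩ := trav_decomp t (b ++ [i]) a hm
      refine ⟨l₁, l₂, l₃ ++ travList ts b (i + 1), ?_, h1, h2, h3⟩
      simp [travList, e]
    · have h' : a ∈ travList ts b (i + 1) := by
        simp only [travList, List.mem_append] at h
        tauto
      obtain ⟨l₁, l₂, l₃, e, h1, h2, h3⟩ := travList_decomp ts b (i + 1) a h'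
      refine ⟨trav t (b ++ [i]) ++ l₁, l₂, l₃, ?_, ?_, h2, h3⟩
      · simp [travList, e]
      · simp only [List.mem_append]
        tauto
end

theorem evens_getElem? {α : Type*} (l : List α) (k : ℕ) :
    (evens l)[k]? = l[2 * k]? := by
  match l, k with
  | [], k => simp [evens]
  | [a], 0 => simp [evens]
  | [a], k + 1 =>
    have : 2 * (k + 1) = k + k + 2 := by ring
    simp [evens, this]
  | a :: b :: rest, 0 => simp [evens]
  | a :: b :: rest, k + 1 =>
    have ih := evens_getElem? rest k
    have : 2 * (k + 1) = 2 * k + 1 + 1 := by ring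
    simp [evens, this, ih]
termination_by l.length

theorem indexOf_cons_self' {α : Type*} [BEq α] [LawfulBEq α] (a : α) (l : List α) :
    (a :: l).idxOf a = 0 := by
  simp [List.idxOf_cons]

theorem indexOf_append_not_mem {α : Type*} [BEq α] [LawfulBEq α] {a : α} {l₁ : List α}
    (l₂ : List α) (h : a ∉ l₁) : (l₁ ++ l₂).idxOf a = l₁.length + l₂.idxOf a := by
  induction l₁ with
  | nil => simp
  | cons b l ih =>
    simp only [List.mem_cons, not_or] at h
    have hb : (b == a) = false := by simpa using fun e => h.1 e.symm
    simp only [List.cons_append, List.idxOf_cons, hb, cond_false, List.length_cons,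
      ih h.2]
    omega

theorem indexOf_eq_of {α : Type*} [BEq α] [LawfulBEq α] {l : List α} {a : α} {n : ℕ}
    (h : l[n]? = some a) (h2 : ∀ m, m < n → l[m]? ≠ some a) : l.idxOf a = n := by
  obtain ⟨hn, he⟩ := List.getElem?_eq_some_iff.mp h
  rw [List.idxOf, List.findIdx_eq hn]
  refine ⟨by simp [he], fun j hj => ?_⟩
  have hne := h2 j hj
  rw [List.getElem?_eq_getElem (hj.trans hn)] at hne
  simpa using fun e => hne (by rw [e])

/-- In the `Trav`-based numbering (vertices ordered by their unique visit that
is preceded by an even number of visits), the number `k` of a vertex `v` is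
`ν_v⁽¹⁾/2 + 1` if `ν_v⁽¹⁾` is even, and `ν_v⁽²⁾/2 + 1` otherwise. -/
theorem trav_number_formula (t : OTree) (a : List ℕ) (ha : a ∈ trav t []) :
    (evens (trav t [])).idxOf a + 1 =
      if Even (nu1 t a) then nu1 t a / 2 + 1 else nu2 t a / 2 + 1 := by
  obtain ⟨l₁, l₂, l₃, e, h1, h2, h3⟩ := trav_decomp t [] a ha
  set L := trav t [] with hL
  -- the first occurrence
  have hnu1 : nu1 t a = l₁.length := by
    rw [nu1, ← hL, e, indexOf_append_not_mem _ h1, indexOf_cons_self', Nat.add_zero]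
  -- the second occurrence
  have hdrop : L.drop (l₁.length + 1) = l₂ ++ a :: l₃ := by
    rw [e]
    have : l₁ ++ a :: (l₂ ++ a :: l₃) = (l₁ ++ [a]) ++ (l₂ ++ a :: l₃) := by simp
    rw [this, List.drop_left' (by simp)]
  have hnu2 : nu2 t a = l₁.length + 1 + l₂.length := by
    rw [nu2, hnu1, ← hL, hdrop, indexOf_append_not_mem _ h2,
      indexOf_cons_self']
    omega
  by_cases hpar : Even l₁.length
  · rw [if_pos (hnu1 ▸ hpar), hnu1]
    congr 1
    apply indexOf_eq_of
    · rw [evens_getElem?, Nat.two_mul_div_two_of_even hpar, e,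
        List.getElem?_append_right le_rfl]
      simp
    · intro m hm
      rw [evens_getElem?]
      have hlt : 2 * m < l₁.length := by omega
      rw [e, List.getElem?_append_left hlt]
      intro hc
      exact h1 (List.mem_of_getElem? hc)
  · rw [if_neg (by rw [hnu1]; exact hpar), hnu2]
    have hodd : Odd l₁.length := Nat.odd_iff.mpr (Nat.not_even_iff.mp hpar)
    have hjeven : Even (l₁.length + 1 + l₂.length) := by
      rcases hodd with ⟨k, hk⟩
      rcases h3 with ⟨m, hm⟩
      exact ⟨k + 1 + m, by omega⟩
    congr 1
    apply indexOf_eq_of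
    · rw [evens_getElem?, Nat.two_mul_div_two_of_even hjeven]
      have e2 : L = ((l₁ ++ [a]) ++ l₂) ++ a :: l₃ := by simp [e]
      have hlen : ((l₁ ++ [a]) ++ l₂).length = l₁.length + 1 + l₂.length := by
        simp only [List.length_append, List.length_cons, List.length_nil]
      rw [e2, ← hlen, List.getElem?_append_right le_rfl]
      simp
    · intro m hm
      rw [evens_getElem?]
      have h2m : 2 * m < l₁.length + 1 + l₂.length := by omega
      have hne : 2 * m ≠ l₁.length := by
        intro hc
        exact hpar ⟨m, by omega⟩
      rcases Nat.lt_or_ge (2 * m) l₁.length with hcase | hcase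
      · rw [e, List.getElem?_append_left hcase]
        intro hc
        exact h1 (List.mem_of_getElem? hc)
      · have hgt : l₁.length < 2 * m := lt_of_le_of_ne hcase (Ne.symm hne)
        have e2 : L = (l₁ ++ [a]) ++ (l₂ ++ a :: l₃) := by simp [e]
        rw [e2, List.getElem?_append_right (by simp; omega)]
        have hlt2 : 2 * m - (l₁ ++ [a]).length < l₂.length := by simp; omega
        rw [List.getElem?_append_left hlt2]
        intro hc
        exact h2 (List.mem_of_getElem? hc)
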